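/- Let (f^h) ⊂ L²(S¹) and f ∈ L²(S¹; L²(𝒴 × 𝒴)). Set f̃^h = f^h ∘ Ξ, f̃(z, y, w) = f(Ξ(z), y, w) and, for φ ∈ C⁰_c(S¹; C⁰(𝒴 × 𝒴)), φ̃(z, y, w) = φ(Ξ(z), y, w)(det ∇Ξ^T(z)∇Ξ(z))^{1/2}. Then the three-scale convergence condition ∫_{S¹} f^h(x) φ(x, r(x)/ε, r(x)/ε²) dx → ∫_{S¹} ∫_𝒴 ∫_𝒴 f(x,y,w) φ(x,y,w) dw dy dx is equivalent to ∫_Ω f̃^h(z) φ̃(z, z'/ε, z'/ε²) dz → ∫_Ω ∫_𝒴 ∫_𝒴 f̃(z,y,w) φ̃(z,y,w) dw dy dz, where z' is the projection of z onto ℝ². -/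

import Mathlib

open MeasureTheory Set Filter Topology Matrix
noncomputable section

abbrev V2 : Type := Fin 2 → ℝ
abbrev V3 : Type := Fin 3 → ℝ
abbrev M3 : Type := Matrix (Fin 3) (Fin 3) ℝ

/-- An embedded compact connected oriented `C³`-surface (with boundary) in `ℝ³`,
parametrized by a single chart `ξ : ω → ℝ³`, together with its unit normal field `n`
(extended to the tubular neighbourhood so as to be constant along normal segments) and
the nearest point projection `π` onto the surface.  The curvature of the surface is
small enough that `π` is well defined on the tubular neighbourhood of half-width `1/2`
and `|I + t S(x)| ∈ (1/2, 3/2)` for all `|t| ≤ 1/2`. -/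
structure Shell where
  ω : Set V2
  hω_open : IsOpen ω
  hω_bdd : Bornology.IsBounded ω
  hω_conn : IsConnected ω
  ξ : V2 → V3
  hξ : ContDiffOn ℝ 3 ξ (closure ω)
  hξ_inj : Set.InjOn ξ (closure ω)
  hξ_imm : ∀ z ∈ ω, LinearIndependent ℝ
      ![fderiv ℝ ξ z (Pi.single 0 1), fderiv ℝ ξ z (Pi.single 1 1)]
  n : V3 → V3
  π : V3 → V3
  hn_unit : ∀ z ∈ ω, ∑ i, (n (ξ z) i) ^ 2 = 1
  hn_tangent : ∀ z ∈ ω, ∀ j : Fin 2, ∑ i, n (ξ z) i * fderiv ℝ ξ z (Pi.single j 1) i = 0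
  hn_ext : ∀ z ∈ ω, ∀ s : ℝ, |s| < 1 / 2 → n (ξ z + s • n (ξ z)) = n (ξ z)
  hπ_proj : ∀ z ∈ ω, ∀ s : ℝ, |s| < 1 / 2 → π (ξ z + s • n (ξ z)) = ξ z
  hπ_nearest : ∀ z ∈ ω, ∀ s : ℝ, |s| < 1 / 2 → ∀ z' ∈ ω,
      s ^ 2 ≤ ∑ i, (ξ z i + s * n (ξ z) i - ξ z' i) ^ 2
  hπ_smooth : ContDiffOn ℝ 2 π {p | ∃ z ∈ ω, ∃ s : ℝ, |s| < 1 / 2 ∧ p = ξ z + s • n (ξ z)}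
  hn_smooth : ContDiffOn ℝ 2 n {p | ∃ z ∈ ω, ∃ s : ℝ, |s| < 1 / 2 ∧ p = ξ z + s • n (ξ z)}
  hsmall : ∀ z ∈ ω, ∀ s : ℝ, |s| ≤ 1 / 2 →
      ‖(1 : V3 →L[ℝ] V3) + s • fderiv ℝ n (ξ z)‖ ∈ Set.Ioo (1 / 2 : ℝ) (3 / 2)

namespace Shell
variable (σ : Shell)

/-- The surface `S`. -/
def S : Set V3 := σ.ξ '' σ.ω

/-- The shell (tubular neighbourhood) `S^h` of thickness `h`. -/
def tube (h : ℝ) : Set V3 := {p | ∃ x ∈ σ.S, ∃ s : ℝ, |s| < h / 2 ∧ p = x + s • σ.n x}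

/-- The signed distance `t(x) = (x - π(x)) · n(π(x))`. -/
def t (x : V3) : ℝ := ∑ i, (x i - σ.π x i) * σ.n (σ.π x) i

/-- The orthogonal projection `T_S(x) = I - n(x) ⊗ n(x)` onto the tangent plane. -/
def Tproj (x : V3) : M3 := 1 - Matrix.vecMulVec (σ.n x) (σ.n x)

/-- The (trivially extended) Weingarten map `S(x) = S(x) T_S(x)`, precomposed with `π`:
it is the differential of the extended unit normal, evaluated at `π x`. -/
def SW (x : V3) : M3 := Matrix.of fun i j => fderiv ℝ σ.n (σ.π x) (Pi.single j 1) i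

/-- The rescaling diffeomorphism `Θ^h(x) = π(x) + (t(x)/h) n(x)`. -/
def Θ (h : ℝ) (x : V3) : V3 := σ.π x + (σ.t x / h) • σ.n x

end Shell

/-- The gradient of a map `ℝ³ → ℝ³` as a `3 × 3` matrix. -/
def gradm (u : V3 → V3) (x : V3) : M3 := Matrix.of fun i j => fderiv ℝ u x (Pi.single j 1) i

/-- The periodicity cell `Y = [0,1)²` of the torus `𝒴 = ℝ²/ℤ²`. -/
def Yc : Set V2 := {y | ∀ i, y i ∈ Set.Ico (0 : ℝ) 1}

/-- A test function in `C⁰_c(S¹, C⁰(𝒴 × 𝒴))`: jointly continuous, compactly supported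
inside `T` in the first variable, and `ℤ²`-periodic in the second and third variables. -/
structure TestFn (T : Set V3) where
  φ : V3 → V2 → V2 → ℝ
  cont : Continuous fun p : V3 × V2 × V2 => φ p.1 p.2.1 p.2.2
  supp : ∃ K : Set V3, IsCompact K ∧ K ⊆ T ∧ ∀ x ∉ K, ∀ y z, φ x y z = 0
  per_y : ∀ x y z, ∀ j : Fin 2, φ x (y + Pi.single j 1) z = φ x y z
  per_z : ∀ x y z, ∀ j : Fin 2, φ x y (z + Pi.single j 1) = φ x y z

/-- The sequence `f k` (bounded in `L²(T)`) converges weakly three-scale on `T`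
(with chart map `r` and scales `ε k`, `ε k ^ 2`) to `F ∈ L²(T; L²(𝒴 × 𝒴))`. -/
def WeakThreeScale (T : Set V3) (r : V3 → V2) (ε : ℕ → ℝ)
    (f : ℕ → V3 → ℝ) (F : V3 → V2 → V2 → ℝ) : Prop :=
  (∃ C : ℝ, ∀ k, ∫ x in T, (f k x) ^ 2 ≤ C) ∧
  ∀ Φ : TestFn T,
    Filter.Tendsto
      (fun k => ∫ x in T, f k x * Φ.φ x ((ε k)⁻¹ • r x) (((ε k) ^ 2)⁻¹ • r x))
      Filter.atTop
      (nhds (∫ x in T, ∫ y in Yc, ∫ z in Yc, F x y z * Φ.φ x y z))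

/-- Projection of a point of `Ω ⊆ ℝ³` onto its first two coordinates. -/
def proj2 (z : V3) : V2 := fun j => z j.castSucc

/-- The flattened cylinder `Ω = ω × I`. -/
def cylinder (σ : Shell) : Set V3 :=
  {z | proj2 z ∈ σ.ω ∧ z 2 ∈ Set.Ioo (-(1 / 2) : ℝ) (1 / 2)}

/-- The map `Ξ(z', z₃) = ξ(z') + z₃ n(ξ(z'))` flattening the tubular neighbourhood. -/
def Xi (σ : Shell) (z : V3) : V3 := σ.ξ (proj2 z) + z 2 • σ.n (σ.ξ (proj2 z))


section Aux

variable (σ : Shell)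

/-- The tubular-neighbourhood set on which `n` and `π` are smooth. -/
def nbhdSet (σ : Shell) : Set V3 :=
  {p | ∃ z ∈ σ.ω, ∃ s : ℝ, |s| < 1 / 2 ∧ p = σ.ξ z + s • σ.n (σ.ξ z)}

lemma cylinder_isOpen : IsOpen (cylinder σ) := by
  have h1 : Continuous proj2 := continuous_pi fun j => continuous_apply _
  have h2 : Continuous fun z : V3 => z 2 := continuous_apply _
  exact (σ.hω_open.preimage h1).inter (isOpen_Ioo.preimage h2)

lemma xi_mem_nbhdSet {z : V3} (hz : z ∈ cylinder σ) : σ.ξ (proj2 z) ∈ nbhdSet σ := by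
  refine ⟨proj2 z, hz.1, 0, by norm_num, ?_⟩
  simp

lemma Xi_differentiableAt {z : V3} (hz : z ∈ cylinder σ) :
    DifferentiableAt ℝ (Xi σ) z := by
  have hz' : proj2 z ∈ σ.ω := hz.1
  have hproj : DifferentiableAt ℝ proj2 z :=
    differentiableAt_pi.2 fun j => differentiableAt_apply _ _
  have hclos : closure σ.ω ∈ 𝓝 (proj2 z) :=
    Filter.mem_of_superset (σ.hω_open.mem_nhds hz') subset_closure
  have hξd : DifferentiableAt ℝ σ.ξ (proj2 z) :=
    ((σ.hξ.contDiffAt hclos).differentiableAt (by norm_num))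
  have hg : DifferentiableAt ℝ (fun w => σ.ξ (proj2 w)) z := hξd.comp z hproj
  have hnd : DifferentiableWithinAt ℝ σ.n (nbhdSet σ) (σ.ξ (proj2 z)) :=
    (σ.hn_smooth _ (xi_mem_nbhdSet σ hz)).differentiableWithinAt (by norm_num)
  have hmaps : Set.MapsTo (fun w => σ.ξ (proj2 w)) (cylinder σ) (nbhdSet σ) :=
    fun w hw => xi_mem_nbhdSet σ hw
  have hng : DifferentiableWithinAt ℝ (fun w => σ.n (σ.ξ (proj2 w))) (cylinder σ) z :=
    hnd.comp z hg.differentiableWithinAt hmaps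
  have h2 : DifferentiableAt ℝ (fun w : V3 => w 2) z := differentiableAt_apply _ _
  have hXi : DifferentiableWithinAt ℝ (Xi σ) (cylinder σ) z :=
    hg.differentiableWithinAt.add (h2.differentiableWithinAt.smul hng)
  exact hXi.differentiableAt ((cylinder_isOpen σ).mem_nhds hz)

lemma gradm_eq_toMatrix (u : V3 → V3) (x : V3) :
    gradm u x = LinearMap.toMatrix' ((fderiv ℝ u x) : V3 →ₗ[ℝ] V3) := by
  ext i j
  rw [LinearMap.toMatrix'_apply]
  simp only [gradm, Matrix.of_apply, ContinuousLinearMap.coe_coe]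

lemma sqrt_det_eq (u : V3 → V3) (x : V3) :
    Real.sqrt (((gradm u x)ᵀ * gradm u x).det) = |(fderiv ℝ u x).det| := by
  rw [Matrix.det_mul, Matrix.det_transpose, gradm_eq_toMatrix, LinearMap.det_toMatrix',
    Real.sqrt_mul_self_eq_abs]

lemma change_of_variables (hΞ_bij : Set.BijOn (Xi σ) (cylinder σ) (σ.tube 1))
    (g : V3 → ℝ) :
    ∫ x in σ.tube 1, g x
      = ∫ z in cylinder σ,
          g (Xi σ z) * Real.sqrt (((gradm (Xi σ) z)ᵀ * gradm (Xi σ) z).det) := by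
  rw [← hΞ_bij.image_eq,
    integral_image_eq_integral_abs_det_fderiv_smul volume (cylinder_isOpen σ).measurableSet
      (fun z hz => ((Xi_differentiableAt σ hz).hasFDerivAt).hasFDerivWithinAt)
      hΞ_bij.injOn g]
  refine integral_congr_ae (Eventually.of_forall fun z => ?_)
  simp only [smul_eq_mul, sqrt_det_eq]
  ring

end Aux

/-- With `f̃ʰ = fʰ ∘ Ξ`, `F̃(z,y,w) = F(Ξ(z),y,w)` and
`φ̃(z,y,w) = φ(Ξ(z),y,w) (det ∇Ξᵀ(z)∇Ξ(z))^{1/2}`, the three-scale convergence condition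
on `S¹` is equivalent, via the change of variables `Ξ`, to the corresponding three-scale
convergence condition on the flat cylinder `Ω`, where `z'` is the projection of `z`
onto `ℝ²`. -/
theorem stmt_7 (σ : Shell) (r : V3 → V2)
    (hr : ∀ x ∈ σ.tube 1, r x ∈ σ.ω ∧ σ.ξ (r x) = σ.π x)
    (hrΞ : ∀ z ∈ cylinder σ, r (Xi σ z) = proj2 z)
    (hΞ_bij : Set.BijOn (Xi σ) (cylinder σ) (σ.tube 1))
    (h : ℕ → ℝ) (hh : ∀ k, h k ∈ Set.Ioo (0 : ℝ) 1)
    (hh0 : Filter.Tendsto h Filter.atTop (nhds 0))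
    (ε : ℝ → ℝ) (hε : ∀ s ∈ Set.Ioo (0 : ℝ) 1, ε s ∈ Set.Ioo (0 : ℝ) 1)
    (f : ℕ → V3 → ℝ) (hf : ∀ k, MemLp (f k) 2 (volume.restrict (σ.tube 1)))
    (hfbd : ∃ C : ℝ, ∀ k, ∫ x in σ.tube 1, (f k x) ^ 2 ≤ C)
    (F : V3 → V2 → V2 → ℝ)
    (hF : MemLp (fun p : V3 × V2 × V2 => F p.1 p.2.1 p.2.2) 2
      ((volume.restrict (σ.tube 1)).prod ((volume.restrict Yc).prod (volume.restrict Yc))))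
    (Φ : TestFn (σ.tube 1)) :
    Filter.Tendsto
      (fun k => ∫ x in σ.tube 1,
        f k x * Φ.φ x ((ε (h k))⁻¹ • r x) (((ε (h k)) ^ 2)⁻¹ • r x))
      Filter.atTop
      (nhds (∫ x in σ.tube 1, ∫ y in Yc, ∫ w in Yc, F x y w * Φ.φ x y w)) ↔
    Filter.Tendsto
      (fun k => ∫ z in cylinder σ,
        (f k (Xi σ z)) *
          (Φ.φ (Xi σ z) ((ε (h k))⁻¹ • proj2 z) (((ε (h k)) ^ 2)⁻¹ • proj2 z) *
            Real.sqrt (((gradm (Xi σ) z)ᵀ * gradm (Xi σ) z).det)))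
      Filter.atTop
      (nhds (∫ z in cylinder σ, ∫ y in Yc, ∫ w in Yc,
        F (Xi σ z) y w *
          (Φ.φ (Xi σ z) y w * Real.sqrt (((gradm (Xi σ) z)ᵀ * gradm (Xi σ) z).det)))) := by
  classical
  have hcov := change_of_variables σ hΞ_bij
  have key1 : ∀ k,
      (∫ x in σ.tube 1,
        f k x * Φ.φ x ((ε (h k))⁻¹ • r x) (((ε (h k)) ^ 2)⁻¹ • r x))
      = ∫ z in cylinder σ,
          (f k (Xi σ z)) *
            (Φ.φ (Xi σ z) ((ε (h k))⁻¹ • proj2 z) (((ε (h k)) ^ 2)⁻¹ • proj2 z) *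
              Real.sqrt (((gradm (Xi σ) z)ᵀ * gradm (Xi σ) z).det)) := by
    intro k
    rw [hcov (fun x => f k x * Φ.φ x ((ε (h k))⁻¹ • r x) (((ε (h k)) ^ 2)⁻¹ • r x))]
    refine setIntegral_congr_fun (cylinder_isOpen σ).measurableSet fun z hz => ?_
    rw [hrΞ z hz, mul_assoc]
  have key2 :
      (∫ x in σ.tube 1, ∫ y in Yc, ∫ w in Yc, F x y w * Φ.φ x y w)
      = ∫ z in cylinder σ, ∫ y in Yc, ∫ w in Yc,
          F (Xi σ z) y w *
            (Φ.φ (Xi σ z) y w *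
              Real.sqrt (((gradm (Xi σ) z)ᵀ * gradm (Xi σ) z).det)) := by
    rw [hcov (fun x => ∫ y in Yc, ∫ w in Yc, F x y w * Φ.φ x y w)]
    refine integral_congr_ae (Eventually.of_forall fun z => ?_)
    simp only [← mul_assoc, integral_mul_const]
  rw [funext key1, key2]
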